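/- Let u ∈ ℝ^{n+1} be a unit vector with all entries nonzero, let m_+ = #{j : u_j > 0}, m_− = #{j : u_j < 0}, S = Σ_j u_j, and let x > 0. Then there exists a real y with Φ_u(x, y) = 0 if and only if −m_−·π < x·S < m_+·π; moreover such y is unique (if Φ_u(x, y₁) = 0 and Φ_u(x, y₂) = 0 then y₁ = y₂). -/

import Mathlib

open Real Filter Finset Topology Set

/-- The continuous inverse cotangent with range `(0, π)`. -/
noncomputable def arccot (θ : ℝ) : ℝ := Real.pi / 2 - Real.arctan θ

lemma arccot_strictAnti : StrictAnti arccot := fun a b h => by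
  unfold arccot; have := Real.arctan_strictMono h; linarith

lemma arccot_cont : Continuous arccot := continuous_const.sub Real.continuous_arctan

lemma tendsto_arccot_atTop : Tendsto arccot atTop (𝓝 0) := by
  have h := Real.tendsto_arctan_atTop.mono_right nhdsWithin_le_nhds
  have := tendsto_const_nhds (x := Real.pi/2) (f := atTop (α := ℝ)) |>.sub h
  exact (by simpa using this : Tendsto (fun θ => Real.pi / 2 - Real.arctan θ) atTop (𝓝 0))

lemma tendsto_arccot_atBot : Tendsto arccot atBot (𝓝 Real.pi) := by
  have h := Real.tendsto_arctan_atBot.mono_right nhdsWithin_le_nhds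
  have := tendsto_const_nhds (x := Real.pi/2) (f := atBot (α := ℝ)) |>.sub h
  have e : Real.pi/2 - (-(Real.pi/2)) = Real.pi := by ring
  rwa [e] at this

/-- The lifting `Φ_u(x, y)` of the argument of `F_u(x + iy)` (for `x > 0`). -/
noncomputable def Phi {m : ℕ} (u : Fin m → ℝ) (x y : ℝ) : ℝ :=
  x * ∑ j, u j
    - ∑ j ∈ Finset.univ.filter (fun j => 0 < u j), arccot ((1 / u j - y) / x)
    + ∑ j ∈ Finset.univ.filter (fun j => u j < 0), arccot (-(1 / u j - y) / x)

section aux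
variable {m : ℕ} (u : Fin m → ℝ) (x : ℝ) (hx : 0 < x)

lemma phi_cont : Continuous (Phi u x) := by
  unfold Phi
  exact (continuous_const.sub (continuous_finset_sum _ fun j _ =>
      arccot_cont.comp (by fun_prop))).add
    (continuous_finset_sum _ fun j _ => arccot_cont.comp (by fun_prop))

include hx

lemma phi_strictAnti (hne : Nonempty (Fin m)) (hnz : ∀ j, u j ≠ 0) :
    StrictAnti (Phi u x) := by
  intro y₁ y₂ h
  have hP : ∀ j ∈ Finset.univ.filter (fun j : Fin m => 0 < u j),
      arccot ((1 / u j - y₁) / x) < arccot ((1 / u j - y₂) / x) := by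
    intro j _
    exact arccot_strictAnti (by gcongr ?_ / x; linarith)
  have hN : ∀ j ∈ Finset.univ.filter (fun j : Fin m => u j < 0),
      arccot (-(1 / u j - y₂) / x) < arccot (-(1 / u j - y₁) / x) := by
    intro j _
    exact arccot_strictAnti (by gcongr ?_ / x; linarith)
  have hPle := Finset.sum_le_sum (fun j hj => le_of_lt (hP j hj))
  have hNle := Finset.sum_le_sum (fun j hj => le_of_lt (hN j hj))
  obtain ⟨j0⟩ := hne
  unfold Phi
  rcases (hnz j0).lt_or_gt with hneg | hpos
  · have hj0 : j0 ∈ Finset.univ.filter (fun j : Fin m => u j < 0) := by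
      simp [hneg]
    have := Finset.sum_lt_sum_of_nonempty ⟨j0, hj0⟩ hN
    linarith
  · have hj0 : j0 ∈ Finset.univ.filter (fun j : Fin m => 0 < u j) := by
      simp [hpos]
    have := Finset.sum_lt_sum_of_nonempty ⟨j0, hj0⟩ hP
    linarith

lemma phi_tendsto_atTop :
    Tendsto (Phi u x) atTop (𝓝 (x * ∑ j, u j -
      (Finset.univ.filter (fun j : Fin m => 0 < u j)).card * Real.pi)) := by
  have key : ∀ c : ℝ, Tendsto (fun y : ℝ => (c - y) / x) atTop atBot := by
    intro c
    exact (tendsto_atBot_add_const_left _ c tendsto_neg_atTop_atBot).atBot_div_const hx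
  have hP : Tendsto (fun y => ∑ j ∈ Finset.univ.filter (fun j : Fin m => 0 < u j),
      arccot ((1 / u j - y) / x)) atTop
      (𝓝 ((Finset.univ.filter (fun j : Fin m => 0 < u j)).card * Real.pi)) := by
    have := tendsto_finset_sum (Finset.univ.filter (fun j : Fin m => 0 < u j))
      (fun j _ => tendsto_arccot_atBot.comp (key (1 / u j)))
    simpa [mul_comm] using this
  have hN : Tendsto (fun y => ∑ j ∈ Finset.univ.filter (fun j : Fin m => u j < 0),
      arccot (-(1 / u j - y) / x)) atTop (𝓝 0) := by
    have := tendsto_finset_sum (Finset.univ.filter (fun j : Fin m => u j < 0))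
      (fun j _ => tendsto_arccot_atTop.comp
        ((tendsto_neg_atBot_atTop.comp (key (1 / u j))).congr
          (fun y => (neg_div x _).symm)))
    simpa using this
  have := (tendsto_const_nhds (x := x * ∑ j, u j) (f := atTop (α := ℝ))).sub hP |>.add hN
  unfold Phi; simpa using this

lemma phi_tendsto_atBot :
    Tendsto (Phi u x) atBot (𝓝 (x * ∑ j, u j +
      (Finset.univ.filter (fun j : Fin m => u j < 0)).card * Real.pi)) := by
  have key : ∀ c : ℝ, Tendsto (fun y : ℝ => (c - y) / x) atBot atTop := by
    intro c
    exact (tendsto_atTop_add_const_left _ c tendsto_neg_atBot_atTop).atTop_div_const hx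
  have hP : Tendsto (fun y => ∑ j ∈ Finset.univ.filter (fun j : Fin m => 0 < u j),
      arccot ((1 / u j - y) / x)) atBot (𝓝 0) := by
    have := tendsto_finset_sum (Finset.univ.filter (fun j : Fin m => 0 < u j))
      (fun j _ => tendsto_arccot_atTop.comp (key (1 / u j)))
    simpa using this
  have hN : Tendsto (fun y => ∑ j ∈ Finset.univ.filter (fun j : Fin m => u j < 0),
      arccot (-(1 / u j - y) / x)) atBot
      (𝓝 ((Finset.univ.filter (fun j : Fin m => u j < 0)).card * Real.pi)) := by
    have := tendsto_finset_sum (Finset.univ.filter (fun j : Fin m => u j < 0))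
      (fun j _ => tendsto_arccot_atBot.comp
        ((tendsto_neg_atTop_atBot.comp (key (1 / u j))).congr
          (fun y => (neg_div x _).symm)))
    simpa [mul_comm] using this
  have := (tendsto_const_nhds (x := x * ∑ j, u j) (f := atBot (α := ℝ))).sub hP |>.add hN
  unfold Phi; simpa using this

end aux

theorem stmt9 (n : ℕ) (u : Fin (n + 1) → ℝ) (hu : ∑ j, (u j) ^ 2 = 1)
    (hnz : ∀ j, u j ≠ 0) (x : ℝ) (hx : 0 < x) :
    ((∃ y : ℝ, Phi u x y = 0) ↔
      (-((Finset.univ.filter (fun j => u j < 0)).card * Real.pi) < x * ∑ j, u j ∧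
        x * ∑ j, u j < (Finset.univ.filter (fun j => 0 < u j)).card * Real.pi)) ∧
    (∀ y₁ y₂ : ℝ, Phi u x y₁ = 0 → Phi u x y₂ = 0 → y₁ = y₂) := by
  have hanti := phi_strictAnti u x hx ⟨0⟩ hnz
  have hT := phi_tendsto_atTop u x hx
  have hB := phi_tendsto_atBot u x hx
  have hlb : ∀ y, x * ∑ j, u j -
      (Finset.univ.filter (fun j : Fin (n+1) => 0 < u j)).card * Real.pi < Phi u x y := by
    intro y
    have h1 : Phi u x (y + 1) < Phi u x y := hanti (by linarith)
    have h2 := le_of_tendsto hT (eventually_atTop.2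
      ⟨y + 1, fun z hz => hanti.antitone hz⟩)
    linarith
  have hub : ∀ y, Phi u x y < x * ∑ j, u j +
      (Finset.univ.filter (fun j : Fin (n+1) => u j < 0)).card * Real.pi := by
    intro y
    have h1 : Phi u x y < Phi u x (y - 1) := hanti (by linarith)
    have h2 := ge_of_tendsto hB (eventually_atBot.2
      ⟨y - 1, fun z hz => hanti.antitone hz⟩)
    linarith
  refine ⟨⟨?_, ?_⟩, fun y₁ y₂ h1 h2 => hanti.injective (h1.trans h2.symm)⟩
  · rintro ⟨y, hy⟩
    have h1 := hlb y
    have h2 := hub y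
    rw [hy] at h1 h2
    exact ⟨by linarith, by linarith⟩
  · rintro ⟨h1, h2⟩
    have hevT : ∀ᶠ y in atTop, Phi u x y < 0 := hT.eventually_lt_const (by linarith)
    have hevB : ∀ᶠ y in atBot, 0 < Phi u x y := hB.eventually_const_lt (by linarith)
    obtain ⟨a, ha⟩ := hevT.exists
    obtain ⟨b, hb⟩ := hevB.exists
    have hba : b ≤ a := by
      by_contra hc
      have := hanti.antitone (le_of_lt (not_le.1 hc))
      linarith
    obtain ⟨y, _, hy⟩ := intermediate_value_Icc' hba (phi_cont u x).continuousOn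
      ⟨le_of_lt ha, le_of_lt hb⟩
    exact ⟨y, hy⟩
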